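/- Let B be an invertible upper triangular real m×m matrix with positive diagonal entries and C = B^T B. Then for any positive definite real symmetric m×m matrix A and κ ∈ ℝ^m, q_κ(B^{-T} A B^{-1}) = q_κ(A)/q_κ(C) = q_{-κ}(C)·q_κ(A). -/

import Mathlib

open MeasureTheory Matrix BigOperators Real

noncomputable section

/-- Determinant of the leading `p × p` principal submatrix. -/
def leadDet {m : ℕ} (A : Matrix (Fin m) (Fin m) ℝ) (p : ℕ) (h : p ≤ m) : ℝ :=
  (A.submatrix (fun i : Fin p => Fin.castLE h i) (fun i : Fin p => Fin.castLE h i)).det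

/-- Generalized power `q_κ(A) = |A_m|^{k_m} ∏_{i<m} |A_i|^{k_i - k_{i+1}}`. -/
def qpow {m : ℕ} (κ : Fin m → ℝ) (A : Matrix (Fin m) (Fin m) ℝ) : ℝ :=
  ∏ i : Fin m, leadDet A ((i : ℕ) + 1) i.isLt ^
    (κ i - if h : (i : ℕ) + 1 < m then κ ⟨(i : ℕ) + 1, h⟩ else 0)

/-- Reduce a sum over `Fin m` to a sum over `Fin p` when terms vanish above `p`. -/
lemma sum_castLE {p m : ℕ} (h : p ≤ m) (f : Fin m → ℝ)
    (hf : ∀ k : Fin m, p ≤ (k : ℕ) → f k = 0) :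
    ∑ k : Fin m, f k = ∑ k : Fin p, f (Fin.castLE h k) := by
  rw [show (∑ k : Fin p, f (Fin.castLE h k)) = ∑ x ∈ Finset.univ.map (Fin.castLEEmb h), f x
    from by rw [Finset.sum_map]; rfl]
  refine (Finset.sum_subset (Finset.subset_univ _) ?_).symm
  intro x _ hx
  refine hf x (le_of_not_gt fun hlt => hx ?_)
  simp only [Finset.mem_map, Finset.mem_univ, true_and]
  exact ⟨⟨(x : ℕ), hlt⟩, by ext; simp⟩

/-- Leading submatrix of a product, when the right factor is upper triangular. -/
lemma submatrix_mul_upper {p m : ℕ} (h : p ≤ m) (X Y : Matrix (Fin m) (Fin m) ℝ)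
    (hY : Y.BlockTriangular id) :
    ((X * Y).submatrix (Fin.castLE h) (Fin.castLE h)) =
      X.submatrix (Fin.castLE h) (Fin.castLE h) * Y.submatrix (Fin.castLE h) (Fin.castLE h) := by
  ext i j
  simp only [Matrix.submatrix_apply, Matrix.mul_apply]
  refine sum_castLE h _ fun k hk => ?_
  have hlt : (Fin.castLE h j : Fin m) < k := by
    rw [Fin.lt_def]; simpa using lt_of_lt_of_le j.isLt hk
  exact mul_eq_zero_of_right _ (hY hlt)

/-- Leading submatrix of a product, when the left factor is lower triangular. -/
lemma submatrix_mul_lower {p m : ℕ} (h : p ≤ m) (X Y : Matrix (Fin m) (Fin m) ℝ)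
    (hX : Xᵀ.BlockTriangular id) :
    ((X * Y).submatrix (Fin.castLE h) (Fin.castLE h)) =
      X.submatrix (Fin.castLE h) (Fin.castLE h) * Y.submatrix (Fin.castLE h) (Fin.castLE h) := by
  ext i j
  simp only [Matrix.submatrix_apply, Matrix.mul_apply]
  refine sum_castLE h _ fun k hk => ?_
  have hlt : (Fin.castLE h i : Fin m) < k := by
    rw [Fin.lt_def]; simpa using lt_of_lt_of_le i.isLt hk
  exact mul_eq_zero_of_left (hX hlt) _

lemma submatrix_one_castLE {p m : ℕ} (h : p ≤ m) :
    ((1 : Matrix (Fin m) (Fin m) ℝ).submatrix (Fin.castLE h) (Fin.castLE h)) = 1 := by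
  ext i j
  simp only [Matrix.submatrix_apply, Matrix.one_apply]
  by_cases hij : i = j <;> simp [hij, Fin.castLE_inj]

/-- Positive-definiteness of leading principal submatrices. -/
lemma posDef_submatrix_castLE {p m : ℕ} (h : p ≤ m) {A : Matrix (Fin m) (Fin m) ℝ}
    (hA : A.PosDef) : (A.submatrix (Fin.castLE h) (Fin.castLE h)).PosDef := by
  refine PosDef.of_dotProduct_mulVec_pos (hA.1.submatrix _) fun x hx => ?_
  set y : Fin m → ℝ := fun k => if hk : (k : ℕ) < p then x ⟨k, hk⟩ else 0 with hy
  have hy0 : y ≠ 0 := by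
    intro h0
    apply hx
    funext i
    have := congrFun h0 (Fin.castLE h i)
    simpa [hy, i.isLt] using this
  have key : (star x) ⬝ᵥ ((A.submatrix (Fin.castLE h) (Fin.castLE h)) *ᵥ x)
      = (star y) ⬝ᵥ (A *ᵥ y) := by
    simp only [dotProduct, Matrix.mulVec, Matrix.submatrix_apply, Pi.star_apply,
      star_trivial, id_eq]
    rw [sum_castLE h (fun k => y k * ∑ l, A k l * y l)
      (fun k hk => by simp [hy, not_lt.mpr hk])]
    refine Finset.sum_congr rfl fun k _ => ?_
    have hxy : y (Fin.castLE h k) = x k := by simp [hy, k.isLt]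
    rw [hxy]
    congr 1
    rw [sum_castLE h (fun l => A (Fin.castLE h k) l * y l)
      (fun l hl => by simp [hy, not_lt.mpr hl])]
    refine Finset.sum_congr rfl fun l _ => by simp [hy, l.isLt]
  rw [key]
  exact hA.dotProduct_mulVec_pos hy0

/-- Leading minors of an upper triangular matrix with positive diagonal are positive. -/
lemma det_submatrix_pos {p m : ℕ} (h : p ≤ m) {B : Matrix (Fin m) (Fin m) ℝ}
    (hB : B.BlockTriangular id) (hBdiag : ∀ i, 0 < B i i) :
    0 < (B.submatrix (Fin.castLE h) (Fin.castLE h)).det := by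
  have htri : (B.submatrix (Fin.castLE h) (Fin.castLE h)).BlockTriangular id := by
    intro i j hij
    exact hB (show (Fin.castLE h j : Fin m) < Fin.castLE h i from hij)
  rw [Matrix.det_of_upperTriangular htri]
  exact Finset.prod_pos fun i _ => hBdiag _

/-- `q_κ(B^{-T} A B^{-1}) = q_κ(A)/q_κ(C) = q_{-κ}(C) q_κ(A)` for
`C = BᵀB`, `B` invertible upper triangular with positive diagonal. -/
theorem qpow_conj_inv {m : ℕ} (κ : Fin m → ℝ)
    (A B : Matrix (Fin m) (Fin m) ℝ)
    (hA : A.PosDef) (hB : B.BlockTriangular id) (hBdiag : ∀ i, 0 < B i i)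
    (hBinv : IsUnit B.det) :
    qpow κ (Bᵀ⁻¹ * A * B⁻¹) = qpow κ A / qpow κ (Bᵀ * B) ∧
      qpow κ (Bᵀ⁻¹ * A * B⁻¹) = qpow (-κ) (Bᵀ * B) * qpow κ A := by
  haveI := B.invertibleOfIsUnitDet hBinv
  have hBi : B⁻¹.BlockTriangular id := blockTriangular_inv_of_blockTriangular hB
  have hBT : (Bᵀ)ᵀ.BlockTriangular id := by rwa [Matrix.transpose_transpose]
  have hBTi : (Bᵀ⁻¹)ᵀ.BlockTriangular id := by
    rw [Matrix.transpose_nonsing_inv, Matrix.transpose_transpose]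
    exact hBi
  have hdetB : ∀ (p : ℕ) (h : p ≤ m),
      0 < (B.submatrix (Fin.castLE h) (Fin.castLE h)).det := fun p h =>
    det_submatrix_pos h hB hBdiag
  have hdetBi : ∀ (p : ℕ) (h : p ≤ m),
      (B⁻¹.submatrix (Fin.castLE h) (Fin.castLE h)).det
        = ((B.submatrix (Fin.castLE h) (Fin.castLE h)).det)⁻¹ := by
    intro p h
    refine eq_inv_of_mul_eq_one_right ?_
    rw [← Matrix.det_mul, ← submatrix_mul_upper h B B⁻¹ hBi]
    rw [Matrix.mul_nonsing_inv B hBinv, submatrix_one_castLE h, Matrix.det_one]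
  have hsubBT : ∀ (p : ℕ) (h : p ≤ m),
      Bᵀ.submatrix (Fin.castLE h) (Fin.castLE h)
        = (B.submatrix (Fin.castLE h) (Fin.castLE h))ᵀ := by
    intro p h; ext i j; simp
  have hleadC : ∀ (p : ℕ) (h : p ≤ m),
      leadDet (Bᵀ * B) p h = (B.submatrix (Fin.castLE h) (Fin.castLE h)).det ^ 2 := by
    intro p h
    rw [leadDet, submatrix_mul_lower h Bᵀ B hBT, Matrix.det_mul, hsubBT p h,
      Matrix.det_transpose, sq]
  have hleadA : ∀ (p : ℕ) (h : p ≤ m), 0 < leadDet A p h := fun p h =>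
    (posDef_submatrix_castLE h hA).det_pos
  have hCpos : ∀ (p : ℕ) (h : p ≤ m), 0 < leadDet (Bᵀ * B) p h := fun p h => by
    rw [hleadC p h]; exact pow_pos (hdetB p h) 2
  have hleadConj : ∀ (p : ℕ) (h : p ≤ m),
      leadDet (Bᵀ⁻¹ * A * B⁻¹) p h = leadDet A p h / leadDet (Bᵀ * B) p h := by
    intro p h
    have h1 : Bᵀ⁻¹.submatrix (Fin.castLE h) (Fin.castLE h)
        = (B⁻¹.submatrix (Fin.castLE h) (Fin.castLE h))ᵀ := by
      rw [show Bᵀ⁻¹ = (B⁻¹)ᵀ from (Matrix.transpose_nonsing_inv B).symm]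
      ext i j; simp
    rw [show leadDet (Bᵀ⁻¹ * A * B⁻¹) p h
        = ((Bᵀ⁻¹ * A * B⁻¹).submatrix (Fin.castLE h) (Fin.castLE h)).det from rfl,
      submatrix_mul_upper h (Bᵀ⁻¹ * A) B⁻¹ hBi,
      submatrix_mul_lower h Bᵀ⁻¹ A hBTi, Matrix.det_mul, Matrix.det_mul, h1,
      Matrix.det_transpose, hleadC p h, hdetBi p h,
      show leadDet A p h = (A.submatrix (Fin.castLE h) (Fin.castLE h)).det from rfl,
      div_eq_mul_inv, sq, mul_inv]
    ring
  have hq1 : qpow κ (Bᵀ⁻¹ * A * B⁻¹) = qpow κ A / qpow κ (Bᵀ * B) := by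
    simp only [qpow]
    rw [← Finset.prod_div_distrib]
    refine Finset.prod_congr rfl fun i _ => ?_
    rw [hleadConj _ i.isLt, Real.div_rpow (hleadA _ i.isLt).le (hCpos _ i.isLt).le]
  have hCq : qpow (-κ) (Bᵀ * B) = (qpow κ (Bᵀ * B))⁻¹ := by
    simp only [qpow]
    rw [← Finset.prod_inv_distrib]
    refine Finset.prod_congr rfl fun i _ => ?_
    rw [← Real.rpow_neg (hCpos _ i.isLt).le]
    congr 1
    by_cases h : (i : ℕ) + 1 < m <;> simp [h] <;> ring
  exact ⟨hq1, by rw [hq1, hCq, div_eq_mul_inv, mul_comm]⟩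

end
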